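/- Let A_1, …, A_n ∈ ℝ^{D×D} and B_1, …, B_n ∈ ℝ^{D'×D'} be symmetric matrices. Then ‖∑_{i=1}^n B_i ⊗ A_i‖ ≤ (∑_{i=1}^n ‖B_i‖_F²)^{1/2} · ‖∑_{i=1}^n A_i²‖^{1/2}, where ⊗ denotes the Kronecker (tensor) product of matrices. -/

import Mathlib

open Matrix MeasureTheory ProbabilityTheory
open scoped NNReal Kronecker

/-- The spectral (operator) norm of a real square matrix. -/
noncomputable def specNorm {n : Type*} [Fintype n] [DecidableEq n] (A : Matrix n n ℝ) : ℝ :=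
  ‖Matrix.toEuclideanCLM (𝕜 := ℝ) A‖

/-- The Frobenius norm of a real square matrix: `√(Tr(Aᵀ A))`. -/
noncomputable def frobNorm {n : Type*} [Fintype n] (A : Matrix n n ℝ) : ℝ :=
  Real.sqrt ((Aᵀ * A).trace)

/-- The trace inner product `⟨A, B⟩ = Tr(Aᵀ B)` of real square matrices. -/
noncomputable def mInner {n : Type*} [Fintype n] (A B : Matrix n n ℝ) : ℝ :=
  (Aᵀ * B).trace

/-- The Euclidean (ℓ₂) norm of a vector in `ℝⁿ`. -/
noncomputable def l2norm {n : ℕ} (x : Fin n → ℝ) : ℝ := Real.sqrt (∑ i, (x i) ^ 2)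

/-- The sign cube `{-1, 1}ⁿ` as a finite set of vectors in `ℝⁿ`. -/
noncomputable def signs (n : ℕ) : Finset (Fin n → ℝ) :=
  Fintype.piFinset fun _ => ({-1, 1} : Finset ℝ)

/-- The distribution of a `d × D` random matrix with i.i.d. Gaussian entries of
mean `0` and variance `1/d`. -/
noncomputable def gaussMat (d D : ℕ) : Measure (Fin d → Fin D → ℝ) :=
  Measure.pi fun _ => Measure.pi fun _ => gaussianReal 0 (d : ℝ≥0)⁻¹

/-- The nuclear (trace) norm `Tr √(Mᵀ M)` of a real square matrix. -/
noncomputable def nucNorm {n : Type*} [Fintype n] [DecidableEq n] (M : Matrix n n ℝ) : ℝ :=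
  ((Matrix.posSemidef_conjTranspose_mul_self M).1.eigenvectorUnitary.1 *
    diagonal (Real.sqrt ∘ (Matrix.posSemidef_conjTranspose_mul_self M).1.eigenvalues) *
    (star (Matrix.posSemidef_conjTranspose_mul_self M).1.eigenvectorUnitary : Matrix n n ℝ)).trace

/-- The dual norm of a norm `N` on `ℝᵐ`: `‖y‖* = sup {⟨x, y⟩ : N x ≤ 1}`. -/
noncomputable def dualNorm {m : ℕ} (N : (Fin m → ℝ) → ℝ) (y : Fin m → ℝ) : ℝ :=
  sSup ((fun x => x ⬝ᵥ y) '' {x | N x ≤ 1})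

/-- The binary entropy function (base 2). -/
noncomputable def binH (p : ℝ) : ℝ := -p * Real.logb 2 p - (1 - p) * Real.logb 2 (1 - p)

section AuxTCS

variable {m : Type*} [Fintype m] [DecidableEq m]

set_option linter.unusedSectionVars false

lemma tcs_mulVec_le (M : Matrix m m ℝ) (x : m → ℝ) :
    Real.sqrt (∑ p, (M *ᵥ x) p ^ 2) ≤ specNorm M * Real.sqrt (∑ p, x p ^ 2) := by
  have h := (Matrix.toEuclideanCLM (𝕜 := ℝ) M).le_opNorm ((WithLp.equiv 2 (m → ℝ)).symm x)
  rw [WithLp.equiv_symm_apply, Matrix.toEuclideanCLM_toLp] at h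
  simp only [EuclideanSpace.norm_eq, PiLp.toLp_apply, Real.norm_eq_abs, sq_abs] at h
  exact h

lemma tcs_quad_le (S : Matrix m m ℝ) (v : m → ℝ) :
    v ⬝ᵥ (S *ᵥ v) ≤ specNorm S * ∑ p, v p ^ 2 := by
  have h1 : v ⬝ᵥ (S *ᵥ v) ≤ Real.sqrt (∑ p, v p ^ 2) * Real.sqrt (∑ p, (S *ᵥ v) p ^ 2) :=
    Real.sum_mul_le_sqrt_mul_sqrt _ _ _
  have h2 := tcs_mulVec_le S v
  calc v ⬝ᵥ (S *ᵥ v) ≤ Real.sqrt (∑ p, v p ^ 2) * Real.sqrt (∑ p, (S *ᵥ v) p ^ 2) := h1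
    _ ≤ Real.sqrt (∑ p, v p ^ 2) * (specNorm S * Real.sqrt (∑ p, v p ^ 2)) :=
        mul_le_mul_of_nonneg_left h2 (Real.sqrt_nonneg _)
    _ = specNorm S * ∑ p, v p ^ 2 := by
        rw [mul_comm, mul_assoc, Real.mul_self_sqrt (by positivity)]

lemma tcs_sum_mulVec {ι : Type*} (s : Finset ι) (N : ι → Matrix m m ℝ) (x : m → ℝ) :
    (∑ i ∈ s, N i) *ᵥ x = ∑ i ∈ s, N i *ᵥ x := by
  ext p
  simp only [Matrix.mulVec, dotProduct, Matrix.sum_apply, Finset.sum_apply,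
    Finset.sum_mul]
  exact Finset.sum_comm

lemma tcs_dot_sum {ι : Type*} (s : Finset ι) (y : m → ℝ) (w : ι → m → ℝ) :
    y ⬝ᵥ (∑ i ∈ s, w i) = ∑ i ∈ s, y ⬝ᵥ w i := by
  simp only [dotProduct, Finset.sum_apply, Finset.mul_sum]
  exact Finset.sum_comm

end AuxTCS

set_option maxHeartbeats 1000000 in
/-- Proposition `tensor-cauchy-schwarz` (Section 6).  For symmetric `A₁, …, Aₙ ∈ ℝ^{D×D}`
and `B₁, …, Bₙ ∈ ℝ^{D'×D'}`:
`‖∑ Bᵢ ⊗ Aᵢ‖ ≤ (∑ ‖Bᵢ‖_F²)^{1/2} ‖∑ Aᵢ²‖^{1/2}`. -/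
theorem tensor_cauchy_schwarz (D D' n : ℕ)
    (A : Fin n → Matrix (Fin D) (Fin D) ℝ)
    (B : Fin n → Matrix (Fin D') (Fin D') ℝ)
    (hA : ∀ i, (A i).IsSymm) (hB : ∀ i, (B i).IsSymm) :
    specNorm (∑ i, B i ⊗ₖ A i) ≤
      Real.sqrt (∑ i, frobNorm (B i) ^ 2) * Real.sqrt (specNorm (∑ i, A i ^ 2)) := by
  classical
  set M : Matrix (Fin D' × Fin D) (Fin D' × Fin D) ℝ := ∑ i, B i ⊗ₖ A i with hM
  set S : Matrix (Fin D) (Fin D) ℝ := ∑ i, A i ^ 2 with hS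
  set α : ℝ := specNorm S with hα
  have hα0 : 0 ≤ α := norm_nonneg _
  set β : ℝ := ∑ i, ∑ j, ∑ k, (B i) j k ^ 2 with hβ
  have hβ0 : 0 ≤ β := by positivity
  -- β equals the sum of squared Frobenius norms
  have hβeq : (∑ i, frobNorm (B i) ^ 2) = β := by
    refine Finset.sum_congr rfl fun i _ => ?_
    have htr : ((B i)ᵀ * B i).trace = ∑ j, ∑ k, (B i) j k ^ 2 := by
      simp only [Matrix.trace, Matrix.diag, Matrix.mul_apply, Matrix.transpose_apply, sq]
      exact Finset.sum_comm
    rw [frobNorm, Real.sq_sqrt (by rw [htr]; positivity), htr]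
  -- key pointwise bound
  have key : ∀ x : (Fin D' × Fin D) → ℝ,
      Real.sqrt (∑ p, (M *ᵥ x) p ^ 2) ≤
        (Real.sqrt β * Real.sqrt α) * Real.sqrt (∑ p, x p ^ 2) := by
    intro x
    set y : (Fin D' × Fin D) → ℝ := M *ᵥ x with hy
    set s : ℝ := ∑ p, x p ^ 2 with hs
    set t : ℝ := ∑ p, y p ^ 2 with ht
    have hs0 : 0 ≤ s := by positivity
    have ht0 : 0 ≤ t := by positivity
    set u : Fin n → (Fin D' × Fin D) → ℝ :=
      fun i => (B i ⊗ₖ (1 : Matrix (Fin D) (Fin D) ℝ)) *ᵥ y with hu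
    set v : Fin n → (Fin D' × Fin D) → ℝ :=
      fun i => ((1 : Matrix (Fin D') (Fin D') ℝ) ⊗ₖ A i) *ᵥ x with hv
    -- Step 1: t = ∑ i, u i ⬝ᵥ v i
    have step1 : t = ∑ i, u i ⬝ᵥ v i := by
      have h1 : t = y ⬝ᵥ (M *ᵥ x) := by
        rw [ht, hy]; simp [dotProduct, sq]
      rw [h1, hM, tcs_sum_mulVec, tcs_dot_sum]
      refine Finset.sum_congr rfl fun i _ => ?_
      have hk : B i ⊗ₖ A i =
          (B i ⊗ₖ (1 : Matrix (Fin D) (Fin D) ℝ)) *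
            ((1 : Matrix (Fin D') (Fin D') ℝ) ⊗ₖ A i) := by
        rw [← Matrix.mul_kronecker_mul, Matrix.mul_one, Matrix.one_mul]
      rw [hk, ← Matrix.mulVec_mulVec, Matrix.dotProduct_mulVec,
        ← Matrix.mulVec_transpose, ← Matrix.kroneckerMap_transpose,
        Matrix.transpose_one, (hB i).eq]
    -- Step 2: Cauchy-Schwarz over the joint index
    have step2 : t ^ 2 ≤ (∑ i, ∑ p, u i p ^ 2) * (∑ i, ∑ p, v i p ^ 2) := by
      have hcs := Finset.sum_mul_sq_le_sq_mul_sq Finset.univ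
        (fun q : Fin n × (Fin D' × Fin D) => u q.1 q.2)
        (fun q : Fin n × (Fin D' × Fin D) => v q.1 q.2)
      rw [Fintype.sum_prod_type, Fintype.sum_prod_type, Fintype.sum_prod_type] at hcs
      have : t = ∑ i, ∑ p, u i p * v i p := by
        rw [step1]; rfl
      rw [this]
      exact hcs
    -- Step 3: bound the u-term
    have step3 : (∑ i, ∑ p, u i p ^ 2) ≤ β * t := by
      rw [hβ, Finset.sum_mul]
      refine Finset.sum_le_sum fun i _ => ?_
      have happ : ∀ a b, u i (a, b) = ∑ k, B i a k * y (k, b) := by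
        intro a b
        simp [hu, Matrix.mulVec, dotProduct, Fintype.sum_prod_type,
          Matrix.kroneckerMap_apply, Matrix.one_apply, mul_ite, mul_one, mul_zero,
          ite_mul, zero_mul]
      calc (∑ p : Fin D' × Fin D, u i p ^ 2)
          = ∑ a, ∑ b, (∑ k, B i a k * y (k, b)) ^ 2 := by
            rw [Fintype.sum_prod_type]
            exact Finset.sum_congr rfl fun a _ => Finset.sum_congr rfl fun b _ => by
              rw [happ]
        _ ≤ ∑ a, ∑ b, (∑ k, B i a k ^ 2) * (∑ k, y (k, b) ^ 2) := by
            refine Finset.sum_le_sum fun a _ => Finset.sum_le_sum fun b _ => ?_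
            exact Finset.sum_mul_sq_le_sq_mul_sq _ _ _
        _ = (∑ a, ∑ k, B i a k ^ 2) * t := by
            rw [ht, Fintype.sum_prod_type, Finset.sum_mul]
            refine Finset.sum_congr rfl fun a _ => ?_
            rw [← Finset.mul_sum, Finset.sum_comm]
    -- Step 4: bound the v-term
    have step4 : (∑ i, ∑ p, v i p ^ 2) ≤ α * s := by
      have happ : ∀ i a b, v i (a, b) = (A i *ᵥ fun l => x (a, l)) b := by
        intro i a b
        simp [hv, Matrix.mulVec, dotProduct, Fintype.sum_prod_type,
          Matrix.kroneckerMap_apply, Matrix.one_apply, mul_ite, mul_one, mul_zero,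
          ite_mul, zero_mul]
      have h1 : (∑ i, ∑ p : Fin D' × Fin D, v i p ^ 2)
          = ∑ a : Fin D', ∑ i, ∑ b, ((A i *ᵥ fun l => x (a, l)) b) ^ 2 := by
        have e : ∀ i : Fin n, (∑ p : Fin D' × Fin D, v i p ^ 2)
            = ∑ a : Fin D', ∑ b, ((A i *ᵥ fun l => x (a, l)) b) ^ 2 := fun i => by
          rw [Fintype.sum_prod_type]
          exact Finset.sum_congr rfl fun a _ => Finset.sum_congr rfl fun b _ => by
            rw [happ]
        rw [Finset.sum_congr rfl fun i _ => e i]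
        exact Finset.sum_comm
      have h2 : ∀ a : Fin D',
          (∑ i, ∑ b, ((A i *ᵥ fun l => x (a, l)) b) ^ 2)
            ≤ α * ∑ l, x (a, l) ^ 2 := by
        intro a
        set w : Fin D → ℝ := fun l => x (a, l) with hw
        have h3 : ∀ i : Fin n,
            (∑ b, ((A i *ᵥ w) b) ^ 2) = w ⬝ᵥ ((A i ^ 2) *ᵥ w) := by
          intro i
          have : w ⬝ᵥ ((A i ^ 2) *ᵥ w) = (A i *ᵥ w) ⬝ᵥ (A i *ᵥ w) := by
            rw [sq, ← Matrix.mulVec_mulVec, Matrix.dotProduct_mulVec,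
              ← Matrix.mulVec_transpose, (hA i).eq]
          rw [this]
          simp [dotProduct, sq]
        have h4 : (∑ i, ∑ b, ((A i *ᵥ w) b) ^ 2) = w ⬝ᵥ (S *ᵥ w) := by
          rw [hS, tcs_sum_mulVec, tcs_dot_sum]
          exact Finset.sum_congr rfl fun i _ => h3 i
        rw [h4, hα]
        exact tcs_quad_le S w
      calc (∑ i, ∑ p : Fin D' × Fin D, v i p ^ 2)
          = ∑ a : Fin D', ∑ i, ∑ b, ((A i *ᵥ fun l => x (a, l)) b) ^ 2 := h1
        _ ≤ ∑ a : Fin D', α * ∑ l, x (a, l) ^ 2 :=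
            Finset.sum_le_sum fun a _ => h2 a
        _ = α * s := by rw [hs, Fintype.sum_prod_type, Finset.mul_sum]
    -- Step 5: conclude
    rcases eq_or_lt_of_le ht0 with h0 | h0
    · rw [← h0, Real.sqrt_zero]
      positivity
    · have h5 : t * t ≤ (Real.sqrt β * Real.sqrt α) ^ 2 * s * t := by
        have hv0 : (0:ℝ) ≤ ∑ i, ∑ p : Fin D' × Fin D, v i p ^ 2 :=
          Finset.sum_nonneg fun _ _ => Finset.sum_nonneg fun _ _ => sq_nonneg _
        have := le_trans step2 (mul_le_mul step3 step4 hv0 (mul_nonneg hβ0 ht0))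
        calc t * t = t ^ 2 := (sq t).symm
          _ ≤ (β * t) * (α * s) := this
          _ = (β * α) * s * t := by ring
          _ = (Real.sqrt β * Real.sqrt α) ^ 2 * s * t := by
              rw [mul_pow, Real.sq_sqrt hβ0, Real.sq_sqrt hα0]
      have h6 : t ≤ (Real.sqrt β * Real.sqrt α) ^ 2 * s :=
        le_of_mul_le_mul_right h5 h0
      calc Real.sqrt t ≤ Real.sqrt ((Real.sqrt β * Real.sqrt α) ^ 2 * s) :=
            Real.sqrt_le_sqrt h6
        _ = (Real.sqrt β * Real.sqrt α) * Real.sqrt s := by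
            rw [Real.sqrt_mul (by positivity), Real.sqrt_sq (by positivity)]
  -- deduce the operator norm bound
  rw [hβeq]
  show ‖Matrix.toEuclideanCLM (𝕜 := ℝ) M‖ ≤ Real.sqrt β * Real.sqrt α
  refine ContinuousLinearMap.opNorm_le_bound _ (by positivity) fun z => ?_
  have h := key (WithLp.equiv 2 _ z)
  have e1 : ‖(Matrix.toEuclideanCLM (𝕜 := ℝ) M) z‖
      = Real.sqrt (∑ p, (M *ᵥ (WithLp.equiv 2 _ z)) p ^ 2) := by
    rw [EuclideanSpace.norm_eq]
    congr 1
    refine Finset.sum_congr rfl fun p _ => ?_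
    rw [Real.norm_eq_abs, sq_abs]
    have h' := congrFun (Matrix.ofLp_toEuclideanCLM (𝕜 := ℝ) M z) p
    exact congrArg (· ^ 2) h'
  have e2 : ‖z‖ = Real.sqrt (∑ p, (WithLp.equiv 2 _ z) p ^ 2) := by
    rw [EuclideanSpace.norm_eq]
    refine congrArg _ (Finset.sum_congr rfl fun p _ => ?_)
    rw [Real.norm_eq_abs, sq_abs]
    rfl
  rw [e1, e2]
  exact h
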